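/- arXiv:1810.04361 — 4 statements merged into one kernel-verified Lean document; each statement's English description precedes it below -/
import Mathlib

section
/- Let (X,d) be a finite metric space, C* a clustering of X, λ > 0, and suppose d is (α,β)-informative w.r.t. C* and λ with 0 ≤ α ≤ 1/2. Let K⁺ = {(x,y) ∈ X^{[2]} : d(x,y) ≤ λ and C*(x,y) = 1} be nonempty, and let T be the uniform distribution on K⁺ (the distribution induced by the sampling procedure P₁₁). Then for every labelling function h : X^{[2]} → {0,1}, |P_{(x,y)∼P⁺}[h(x,y) = 0] − P_{(x,y)∼T}[h(x,y) = 0]| ≤ 2α. -/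
open Finset

/-- A clustering of `X`, identified with its pair-labelling function:
`C x y = true` iff `x` and `y` lie in the same block. -/
def IsClustering {X : Type*} (C : X → X → Bool) : Prop :=
  (∀ x, C x x = true) ∧ (∀ x y, C x y = C y x) ∧
    (∀ x y z, C x y = true → C y z = true → C x z = true)

/-- Let `(X,d)` be a finite metric space, `C*` a clustering, `λ > 0`, and
suppose `d` is `(α,β)`-informative w.r.t. `C*` and `λ` with `0 ≤ α ≤ 1/2`. Let
`K⁺ = {(x,y) ∈ X^{[2]} : d(x,y) ≤ λ ∧ C*(x,y) = 1}` be nonempty and let `T` be the uniform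
distribution on `K⁺` (the distribution induced by procedure `P₁₁`). Then for every labelling
function `h : X^{[2]} → {0,1}`,
`|P_{(x,y)∼P⁺}[h(x,y)=0] − P_{(x,y)∼T}[h(x,y)=0]| ≤ 2α`. -/
theorem stmt3 {X : Type*} [Fintype X] [DecidableEq X] [MetricSpace X]
    (Cstar : X → X → Bool) (hC : IsClustering Cstar)
    (lam : ℝ) (hlam : 0 < lam)
    (Xsq : Finset (X × X)) (hXsq : Xsq = univ.filter fun pr => pr.1 ≠ pr.2)
    (pos : Finset (X × X)) (hpos : pos = Xsq.filter fun pr => Cstar pr.1 pr.2 = true)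
    (K : Finset (X × X)) (hK : K = Xsq.filter fun pr => dist pr.1 pr.2 ≤ lam)
    (Kplus : Finset (X × X)) (hKplus : Kplus = K.filter fun pr => Cstar pr.1 pr.2 = true)
    (hne : Kplus.Nonempty)
    (α β : ℝ) (hα0 : 0 ≤ α) (hα : α ≤ 1 / 2)
    -- `(α,β)`-informative: `P_{U²}[d(x,y) > λ | C*(x,y)=1] ≤ α` and
    -- `P_{U²}[C*(x,y)=1 | d(x,y) ≤ λ] ≥ β`
    (hinfα : ((pos.filter fun pr => lam < dist pr.1 pr.2).card : ℝ) / pos.card ≤ α)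
    (hinfβ : β ≤ (Kplus.card : ℝ) / K.card) :
    ∀ h : X × X → Bool,
      |((pos.filter fun pr => h pr = false).card : ℝ) / pos.card -
        ((Kplus.filter fun pr => h pr = false).card : ℝ) / Kplus.card| ≤ 2 * α := by
  intro h
  -- Kplus = pos filtered by distance
  have hKp : Kplus = pos.filter fun pr => dist pr.1 pr.2 ≤ lam := by
    subst hKplus hK hpos
    simp [Finset.filter_filter]
    congr 1
    ext pr
    tauto
  set p : ℕ := pos.card with hp
  set k : ℕ := Kplus.card with hk
  set m : ℕ := (pos.filter fun pr => lam < dist pr.1 pr.2).card with hm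
  set A : ℕ := (pos.filter fun pr => h pr = false).card with hA
  set B : ℕ := (Kplus.filter fun pr => h pr = false).card with hB
  have hkpos : 0 < k := Finset.card_pos.mpr hne
  have hsub : Kplus ⊆ pos := by rw [hKp]; exact Finset.filter_subset _ _
  have hkp : k ≤ p := Finset.card_le_card hsub
  have hppos : 0 < p := lt_of_lt_of_le hkpos hkp
  have hsplit : k + m = p := by
    have h1 := Finset.card_filter_add_card_filter_not
      (s := pos) (p := fun pr => dist pr.1 pr.2 ≤ lam)
    have h2 : (pos.filter fun pr => ¬ dist pr.1 pr.2 ≤ lam).card = m := by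
      rw [hm]; congr 1; apply Finset.filter_congr; intro pr _; simp [not_le]
    rw [hk, hKp, hp]
    omega
  have hBA : B ≤ A :=
    Finset.card_le_card (Finset.filter_subset_filter _ hsub)
  have hABm : A ≤ B + m := by
    have hsub2 : (pos.filter fun pr => h pr = false) ⊆
        (Kplus.filter fun pr => h pr = false) ∪
          (pos.filter fun pr => lam < dist pr.1 pr.2) := by
      intro pr hpr
      simp only [Finset.mem_filter, Finset.mem_union, hKp] at *
      rcases le_or_gt (dist pr.1 pr.2) lam with hd | hd
      · exact Or.inl ⟨⟨hpr.1, hd⟩, hpr.2⟩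
      · exact Or.inr ⟨hpr.1, hd⟩
    calc A ≤ ((Kplus.filter fun pr => h pr = false) ∪
          (pos.filter fun pr => lam < dist pr.1 pr.2)).card := Finset.card_le_card hsub2
      _ ≤ B + m := Finset.card_union_le _ _
  have hBk : B ≤ k := Finset.card_le_card (Finset.filter_subset _ _)
  have hAp : A ≤ p := Finset.card_le_card (Finset.filter_subset _ _)
  -- real versions
  have hpR : (0:ℝ) < p := by exact_mod_cast hppos
  have hkR : (0:ℝ) < k := by exact_mod_cast hkpos
  have hmα : (m:ℝ) ≤ α * p := by
    have := hinfα
    rw [div_le_iff₀ hpR] at this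
    exact this
  have hkpR : (k:ℝ) ≤ p := by exact_mod_cast hkp
  have hBAR : (B:ℝ) ≤ A := by exact_mod_cast hBA
  have hABmR : (A:ℝ) ≤ B + m := by exact_mod_cast hABm
  have hBkR : (B:ℝ) ≤ k := by exact_mod_cast hBk
  have hApR : (A:ℝ) ≤ p := by exact_mod_cast hAp
  have hsplitR : (k:ℝ) + m = p := by exact_mod_cast hsplit
  rw [abs_le]
  constructor
  · rw [neg_le, neg_sub, div_sub_div _ _ (ne_of_gt hkR) (ne_of_gt hpR),
      div_le_iff₀ (by positivity)]
    nlinarith [mul_nonneg hα0 hkR.le, mul_nonneg (mul_nonneg hα0 hkR.le) hpR.le]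
  · rw [div_sub_div _ _ (ne_of_gt hpR) (ne_of_gt hkR), div_le_iff₀ (by positivity)]
    nlinarith [mul_nonneg hα0 hkR.le, mul_nonneg (mul_nonneg hα0 hkR.le) hpR.le]
end

section
/- Let X be a finite set and F = {C₁, ..., C_s} a finite class of clusterings of X, inducing the class ℱ = {C : X^{[2]} → {0,1} | C ∈ F} of pair-labelings. Then the VC dimension of ℱ is at most g(s), where g(s) is the smallest integer n such that B_{⌈√n⌉} ≥ s and B_k denotes the k-th Bell number, i.e. the number of partitions of a k-element set. Equivalently, every subset of X^{[2]} shattered by ℱ has size at most g(s). -/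
open Finset

/-- A finite class `F` of clusterings (as pair-labelling functions) shatters a finite set `P`
of pairs if every `{0,1}`-labelling of `P` is realized by some member of `F`. -/
def Shatters {X : Type*} (F : Finset (X → X → Bool)) (P : Finset (X × X)) : Prop :=
  ∀ f : X × X → Bool, ∃ C ∈ F, ∀ pr ∈ P, C pr.1 pr.2 = f pr

/-- The `k`-th Bell number: the number of partitions of a `k`-element set. -/
noncomputable def Bell (k : ℕ) : ℕ := Nat.card (Finpartition (Finset.univ : Finset (Fin k)))

/-- A finpartition of `univ : Finset (Fin k)` is determined by its same-part relation. -/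
lemma finpartition_eq_of_part_rel {k : ℕ}
    (P Q : Finpartition (Finset.univ : Finset (Fin k)))
    (h : ∀ i j : Fin k, P.part i = P.part j ↔ Q.part i = Q.part j) : P = Q := by
  have key : ∀ i : Fin k, P.part i = Q.part i := by
    intro i
    ext x
    rw [P.mem_part_iff_part_eq_part (mem_univ x) (mem_univ i),
      Q.mem_part_iff_part_eq_part (mem_univ x) (mem_univ i)]
    exact h x i
  ext t
  constructor
  · intro ht
    obtain ⟨i, hi⟩ := P.nonempty_of_mem_parts ht
    have : P.part i = t := P.part_eq_of_mem ht hi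
    rw [← this, key]
    exact Q.part_mem.2 (mem_univ i)
  · intro ht
    obtain ⟨i, hi⟩ := Q.nonempty_of_mem_parts ht
    have : Q.part i = t := Q.part_eq_of_mem ht hi
    rw [← this, ← key]
    exact P.part_mem.2 (mem_univ i)

/-- The set of strictly increasing pairs in `Fin k × Fin k` has at most `k.choose 2`
elements. -/
lemma card_ltPairs_le (k : ℕ) :
    ((Finset.univ : Finset (Fin k × Fin k)).filter fun p => p.1 < p.2).card ≤ k.choose 2 := by
  classical
  have h : ((Finset.univ : Finset (Fin k × Fin k)).filter fun p => p.1 < p.2).card ≤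
      ((Finset.univ : Finset (Fin k)).powersetCard 2).card := by
    apply Finset.card_le_card_of_injOn (fun p => ({p.1, p.2} : Finset (Fin k)))
    · intro p hp
      simp only [mem_coe, mem_filter] at hp ⊢
      rw [Finset.mem_powersetCard]
      exact ⟨by intro x _; exact mem_univ x, Finset.card_pair (ne_of_lt hp.2)⟩
    · intro p hp q hq hpq
      simp only [coe_filter, Set.mem_setOf_eq] at hp hq
      have hset : ({p.1, p.2} : Set (Fin k)) = {q.1, q.2} := by
        have := congrArg (fun t : Finset (Fin k) => (t : Set (Fin k))) hpq
        simpa using this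
      rcases Set.pair_eq_pair_iff.1 hset with ⟨h1, h2⟩ | ⟨h1, h2⟩
      · exact Prod.ext h1 h2
      · exfalso
        have := hp.2
        rw [h1, h2] at this
        exact absurd hq.2 (not_lt_of_gt this)
  rwa [Finset.card_powersetCard, Finset.card_univ, Fintype.card_fin] at h

/-- The `k`-th Bell number is at most `2 ^ (k.choose 2)`. -/
lemma bell_le_two_pow (k : ℕ) : Bell k ≤ 2 ^ k.choose 2 := by
  classical
  set S : Finset (Fin k × Fin k) :=
    (Finset.univ : Finset (Fin k × Fin k)).filter (fun p => p.1 < p.2) with hS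
  have hinj : Function.Injective
      (fun P : Finpartition (Finset.univ : Finset (Fin k)) =>
        (⟨S.filter (fun p => P.part p.1 = P.part p.2), Finset.filter_subset _ _⟩ :
          {t : Finset (Fin k × Fin k) // t ⊆ S})) := by
    intro P Q hPQ
    simp only [Subtype.mk.injEq] at hPQ
    apply finpartition_eq_of_part_rel
    have hrel : ∀ p ∈ S, (P.part p.1 = P.part p.2 ↔ Q.part p.1 = Q.part p.2) := by
      intro p hp
      constructor
      · intro h
        have : p ∈ S.filter (fun p => P.part p.1 = P.part p.2) := by
          simp [Finset.mem_filter, hp, h]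
        rw [hPQ] at this
        exact (Finset.mem_filter.1 this).2
      · intro h
        have : p ∈ S.filter (fun p => Q.part p.1 = Q.part p.2) := by
          simp [Finset.mem_filter, hp, h]
        rw [← hPQ] at this
        exact (Finset.mem_filter.1 this).2
    intro i j
    rcases lt_trichotomy i j with hij | hij | hij
    · exact hrel (i, j) (by simp [hS, hij])
    · subst hij; simp
    · have := hrel (j, i) (by simp [hS, hij])
      constructor
      · intro h; exact ((this.1 h.symm)).symm
      · intro h; exact ((this.2 h.symm)).symm
  have hcard : Bell k ≤ Nat.card {t : Finset (Fin k × Fin k) // t ⊆ S} :=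
    Nat.card_le_card_of_injective _ hinj
  have : Nat.card {t : Finset (Fin k × Fin k) // t ⊆ S} = 2 ^ S.card := by
    rw [Nat.card_eq_fintype_card]
    have : Fintype.card {t : Finset (Fin k × Fin k) // t ⊆ S} = S.powerset.card := by
      rw [Fintype.card_subtype]
      congr 1
      ext t
      simp [Finset.mem_powerset]
    rw [this, Finset.card_powerset]
  rw [this] at hcard
  exact hcard.trans (Nat.pow_le_pow_right (by norm_num) (card_ltPairs_le k))

lemma choose_two_le_sq (k : ℕ) : k.choose 2 ≤ (k - 1) ^ 2 := by
  match k with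
  | 0 => simp
  | 1 => rfl
  | (m + 2) =>
    rw [Nat.choose_two_right]
    refine Nat.div_le_of_le_mul ?_
    have h21 : m + 2 - 1 = m + 1 := rfl
    rw [h21]
    nlinarith

/-- `(⌈√g⌉).choose 2 ≤ g`. -/
lemma choose_ceil_sqrt_le (g : ℕ) : (⌈Real.sqrt g⌉₊).choose 2 ≤ g := by
  set k := ⌈Real.sqrt g⌉₊ with hk
  rcases le_or_gt k 1 with h1 | h1
  · have : k.choose 2 = 0 := Nat.choose_eq_zero_of_lt (by omega)
    omega
  · -- k ≥ 2 : then (k-1)^2 < g, and k.choose 2 ≤ (k-1)^2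
    have hceil : (k : ℝ) < Real.sqrt g + 1 := Nat.ceil_lt_add_one (Real.sqrt_nonneg _)
    have hk1 : ((k - 1 : ℕ) : ℝ) < Real.sqrt g := by
      have : ((k - 1 : ℕ) : ℝ) = (k : ℝ) - 1 := by
        push_cast [Nat.cast_sub (by omega : 1 ≤ k)]; ring
      rw [this]; linarith
    have hsq : ((k - 1 : ℕ) : ℝ) ^ 2 < (g : ℝ) := by
      have h0 : (0 : ℝ) ≤ ((k - 1 : ℕ) : ℝ) := Nat.cast_nonneg _
      nlinarith [Real.sq_sqrt (Nat.cast_nonneg g : (0:ℝ) ≤ (g:ℝ)), Real.sqrt_nonneg (g : ℝ)]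
    have hsqn : (k - 1) ^ 2 < g := by exact_mod_cast (by push_cast at hsq ⊢; exact hsq : (((k-1)^2 : ℕ) : ℝ) < (g : ℝ))
    have hch : k.choose 2 ≤ (k - 1) ^ 2 := choose_two_le_sq k
    omega

/-- Shattering a set of pairs of size `n` requires at least `2 ^ n` functions. -/
lemma two_pow_le_of_shatters {X : Type*} [DecidableEq X]
    (F : Finset (X → X → Bool)) (P : Finset (X × X)) (h : Shatters F P) :
    2 ^ P.card ≤ F.card := by
  classical
  rcases Finset.eq_empty_or_nonempty F with rfl | _
  · obtain ⟨C, hC, -⟩ := h (fun _ => false)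
    exact absurd hC (Finset.notMem_empty _)
  have spec : ∀ b : {pr // pr ∈ P} → Bool, ∃ C ∈ F, ∀ pr (hpr : pr ∈ P),
      C pr.1 pr.2 = b ⟨pr, hpr⟩ := by
    intro b
    obtain ⟨C, hC, hC2⟩ := h (fun pr => if hpr : pr ∈ P then b ⟨pr, hpr⟩ else false)
    refine ⟨C, hC, fun pr hpr => ?_⟩
    have := hC2 pr hpr
    simpa [hpr] using this
  let e : ({pr // pr ∈ P} → Bool) → {C // C ∈ F} :=
    fun b => ⟨(spec b).choose, (spec b).choose_spec.1⟩
  have einj : Function.Injective e := by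
    intro b1 b2 hb
    funext pr
    have h1 := (spec b1).choose_spec.2 pr.1 pr.2
    have h2 := (spec b2).choose_spec.2 pr.1 pr.2
    have : (spec b1).choose = (spec b2).choose := congrArg Subtype.val hb
    rw [this] at h1
    exact h1.symm.trans h2
  have := Fintype.card_le_of_injective e einj
  simpa [Fintype.card_fun, Fintype.card_coe] using this

/-- For a finite set `X` and a finite class `F = {C₁, …, C_s}` of
clusterings of `X` inducing the class `ℱ` of pair-labelings, the VC dimension of `ℱ` is at
most `g(s)`, the smallest integer `n` such that `B_{⌈√n⌉} ≥ s` (where `B_k` is the `k`-th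
Bell number); equivalently, every subset of `X^{[2]}` shattered by `ℱ` has size at most
`g(s)`. -/
theorem stmt7 {X : Type*} [Fintype X] [DecidableEq X]
    (F : Finset (X → X → Bool)) (hF : ∀ C ∈ F, IsClustering C)
    (s : ℕ) (hs : s = F.card)
    (Xsq : Finset (X × X)) (hXsq : Xsq = univ.filter fun pr => pr.1 ≠ pr.2)
    (g : ℕ)
    -- `g` is the smallest integer `n` such that `B_{⌈√n⌉} ≥ s`
    (hg : s ≤ Bell ⌈Real.sqrt g⌉₊)
    (hgmin : ∀ n : ℕ, n < g → Bell ⌈Real.sqrt n⌉₊ < s) :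
    ∀ P ⊆ Xsq, Shatters F P → P.card ≤ g := by
  intro P _ hshat
  have h1 : 2 ^ P.card ≤ s := hs ▸ two_pow_le_of_shatters F P hshat
  have h2 : s ≤ 2 ^ g :=
    hg.trans ((bell_le_two_pow _).trans
      (Nat.pow_le_pow_right (by norm_num) (choose_ceil_sqrt_le g)))
  exact (Nat.pow_le_pow_iff_right (by norm_num)).1 (h1.trans h2)
end

section
/- Let G = (V, E) be a finite simple graph and p ≥ 1 an integer. For a partition C of V, define the correlation loss L_{d_E}(C) = NL(C) + PL(C), where NL(C) is the number of unordered pairs {x,y} of distinct vertices lying in the same block of C with {x,y} ∉ E, and PL(C) is the number of edges {x,y} ∈ E whose endpoints lie in different blocks of C. Then for every partition C of V all of whose blocks have size at most p: (i) L_{d_E}(C) ≥ |E| − |V|(p−1)/2; and (ii) equality holds if and only if every block of C induces a clique in G and has size exactly p. In particular, if some partition into cliques of size exactly p exists, it is the unique-type minimizer: every partition with maximum block size at most p that is not a partition into size-p cliques has strictly larger correlation loss. -/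
open Finset
open scoped Classical

/-- `NL(C)`: the number of unordered pairs of distinct vertices lying in the same block of
the partition `C` that are not edges of `G`. -/
noncomputable def NL {V : Type*} [Fintype V] [DecidableEq V] (G : SimpleGraph V)
    [DecidableRel G.Adj] (C : Finpartition (Finset.univ : Finset V)) : ℕ :=
  ((Finset.univ : Finset (Sym2 V)).filter fun e =>
    ¬ e.IsDiag ∧ (∃ B ∈ C.parts, ∀ x ∈ e, x ∈ B) ∧ e ∉ G.edgeFinset).card

/-- `PL(C)`: the number of edges of `G` whose endpoints lie in different blocks of `C`. -/
noncomputable def PL {V : Type*} [Fintype V] [DecidableEq V] (G : SimpleGraph V)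
    [DecidableRel G.Adj] (C : Finpartition (Finset.univ : Finset V)) : ℕ :=
  (G.edgeFinset.filter fun e => ¬ ∃ B ∈ C.parts, ∀ x ∈ e, x ∈ B).card

/-- The correlation loss `L_{d_E}(C) = NL(C) + PL(C)`. -/
noncomputable def corrLoss {V : Type*} [Fintype V] [DecidableEq V] (G : SimpleGraph V)
    [DecidableRel G.Adj] (C : Finpartition (Finset.univ : Finset V)) : ℕ :=
  NL G C + PL G C

/-- A block `B` induces a clique in `G`. -/
def IsCliqueBlock {V : Type*} (G : SimpleGraph V) (B : Finset V) : Prop :=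
  ∀ x ∈ B, ∀ y ∈ B, x ≠ y → G.Adj x y

noncomputable def blkGraph {V : Type*} [Fintype V] [DecidableEq V]
    (C : Finpartition (Finset.univ : Finset V)) : SimpleGraph V where
  Adj x y := x ≠ y ∧ ∃ B ∈ C.parts, x ∈ B ∧ y ∈ B
  symm := by constructor; rintro x y ⟨h, B, hB, hx, hy⟩; exact ⟨h.symm, B, hB, hy, hx⟩
  loopless := by constructor; rintro x ⟨h, _⟩; exact h rfl

lemma blk_edge {V : Type*} [Fintype V] [DecidableEq V]
    (C : Finpartition (Finset.univ : Finset V)) (e : Sym2 V) :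
    e ∈ (blkGraph C).edgeFinset ↔ ¬ e.IsDiag ∧ (∃ B ∈ C.parts, ∀ x ∈ e, x ∈ B) := by
  induction e using Sym2.ind with
  | _ x y =>
    rw [SimpleGraph.mem_edgeFinset, SimpleGraph.mem_edgeSet]
    simp only [SimpleGraph.mem_edgeFinset, SimpleGraph.mem_edgeSet, blkGraph,
      Sym2.isDiag_iff_proj_eq, Sym2.mem_iff]
    constructor
    · rintro ⟨h, B, hB, hx, hy⟩
      exact ⟨h, B, hB, fun z hz => by rcases hz with rfl | rfl <;> assumption⟩
    · rintro ⟨h, B, hB, hall⟩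
      exact ⟨h, B, hB, hall x (Or.inl rfl), hall y (Or.inr rfl)⟩

lemma blk_degree {V : Type*} [Fintype V] [DecidableEq V]
    (C : Finpartition (Finset.univ : Finset V)) (v : V) :
    (blkGraph C).degree v = (C.part v).card - 1 := by
  have h1 : (blkGraph C).neighborFinset v = (C.part v).erase v := by
    ext x
    rw [SimpleGraph.mem_neighborFinset]
    simp only [SimpleGraph.mem_neighborFinset, mem_erase, blkGraph]
    constructor
    · rintro ⟨h, B, hB, hv, hx⟩
      have := C.part_eq_of_mem hB hv
      exact ⟨fun hxv => h (hxv ▸ rfl), this ▸ hx⟩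
    · rintro ⟨h, hx⟩
      exact ⟨Ne.symm h, C.part v, C.part_mem.2 (mem_univ v), C.mem_part (mem_univ v), hx⟩
  rw [SimpleGraph.degree, h1, card_erase_of_mem (C.mem_part (mem_univ v))]


/-- Let `G = (V,E)` be a finite simple graph and `p ≥ 1`. For every
partition `C` of `V` all of whose blocks have size at most `p`:
(i) `L_{d_E}(C) ≥ |E| - |V|(p-1)/2`; and (ii) equality holds iff every block of `C` induces
a clique of size exactly `p`. In particular, if some partition into cliques of size exactly
`p` exists, then every partition with maximum block size at most `p` that is not a partition
into size-`p` cliques has strictly larger correlation loss. -/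
theorem stmt12 {V : Type*} [Fintype V] [DecidableEq V] (G : SimpleGraph V)
    [DecidableRel G.Adj] (p : ℕ) (hp : 1 ≤ p) :
    (∀ C : Finpartition (Finset.univ : Finset V), (∀ B ∈ C.parts, B.card ≤ p) →
      ((corrLoss G C : ℝ) ≥
          (G.edgeFinset.card : ℝ) - (Fintype.card V : ℝ) * ((p : ℝ) - 1) / 2 ∧
       ((corrLoss G C : ℝ) =
          (G.edgeFinset.card : ℝ) - (Fintype.card V : ℝ) * ((p : ℝ) - 1) / 2 ↔
          ∀ B ∈ C.parts, B.card = p ∧ IsCliqueBlock G B))) ∧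
    ((∃ C₀ : Finpartition (Finset.univ : Finset V),
        ∀ B ∈ C₀.parts, B.card = p ∧ IsCliqueBlock G B) →
      ∀ C : Finpartition (Finset.univ : Finset V), (∀ B ∈ C.parts, B.card ≤ p) →
        ¬ (∀ B ∈ C.parts, B.card = p ∧ IsCliqueBlock G B) →
        (corrLoss G C : ℝ) >
          (G.edgeFinset.card : ℝ) - (Fintype.card V : ℝ) * ((p : ℝ) - 1) / 2) := by
  have main : ∀ C : Finpartition (Finset.univ : Finset V), (∀ B ∈ C.parts, B.card ≤ p) →
      ((corrLoss G C : ℝ) ≥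
          (G.edgeFinset.card : ℝ) - (Fintype.card V : ℝ) * ((p : ℝ) - 1) / 2 ∧
       ((corrLoss G C : ℝ) =
          (G.edgeFinset.card : ℝ) - (Fintype.card V : ℝ) * ((p : ℝ) - 1) / 2 ↔
          ∀ B ∈ C.parts, B.card = p ∧ IsCliqueBlock G B)) := by
    intro C hC
    set W := (blkGraph C).edgeFinset with hW
    set E := G.edgeFinset with hE
    -- NL and PL as set differences
    have hNL : NL G C = (W \ E).card := by
      unfold NL
      congr 1
      ext e
      simp only [hW, hE] at *
      simp only [mem_filter, mem_univ, true_and, mem_sdiff, blk_edge]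
      tauto
    have hPL : PL G C = (E \ W).card := by
      unfold PL
      congr 1
      ext e
      simp only [hW, hE] at *
      simp only [mem_filter, mem_sdiff, blk_edge]
      constructor
      · rintro ⟨he, h⟩; exact ⟨he, fun ⟨_, hB⟩ => h hB⟩
      · rintro ⟨he, h⟩
        refine ⟨he, fun hB => h ⟨?_, hB⟩⟩
        exact G.not_isDiag_of_mem_edgeSet (SimpleGraph.mem_edgeFinset.1 he)
    -- cardinal identities
    have h1 : NL G C + (W ∩ E).card = W.card := by
      rw [hNL]; exact card_sdiff_add_card_inter W E
    have h2 : PL G C + (W ∩ E).card = E.card := by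
      rw [hPL, inter_comm]; exact card_sdiff_add_card_inter E W
    -- degree sum
    have hdeg : ∀ v : V, (blkGraph C).degree v ≤ p - 1 := by
      intro v
      rw [blk_degree]
      exact Nat.sub_le_sub_right (hC _ (C.part_mem.2 (mem_univ v))) 1
    have hsum : ∑ v, (blkGraph C).degree v = 2 * W.card :=
      SimpleGraph.sum_degrees_eq_twice_card_edges _
    have hsumle : ∑ v, (blkGraph C).degree v ≤ Fintype.card V * (p - 1) := by
      calc ∑ v, (blkGraph C).degree v ≤ ∑ _v : V, (p - 1) := sum_le_sum fun v _ => hdeg v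
        _ = Fintype.card V * (p - 1) := by rw [sum_const, card_univ, smul_eq_mul]
    -- equality characterization for degree sum
    have hpartcard : ∀ v : V, 1 ≤ (C.part v).card :=
      fun v => card_pos.2 ⟨v, C.mem_part (mem_univ v)⟩
    have hsizes : (∑ v, (blkGraph C).degree v = Fintype.card V * (p - 1)) ↔
        ∀ B ∈ C.parts, B.card = p := by
      rw [show Fintype.card V * (p - 1) = ∑ _v : V, (p - 1) by
        rw [sum_const, card_univ, smul_eq_mul]]
      rw [sum_eq_sum_iff_of_le fun v _ => hdeg v]
      constructor
      · intro h B hB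
        obtain ⟨v, hv⟩ := C.nonempty_of_mem_parts hB
        have := h v (mem_univ v)
        rw [blk_degree, C.part_eq_of_mem hB hv] at this
        have := hC B hB
        have := card_pos.2 ⟨v, hv⟩
        omega
      · intro h v _
        rw [blk_degree, h _ (C.part_mem.2 (mem_univ v))]
    -- clique characterization
    have hclique : NL G C = 0 ↔ ∀ B ∈ C.parts, IsCliqueBlock G B := by
      rw [hNL, card_eq_zero, sdiff_eq_empty_iff_subset]
      constructor
      · intro h B hB x hx y hy hxy
        have : s(x, y) ∈ W := (blk_edge C _).2
          ⟨by simpa [Sym2.isDiag_iff_proj_eq] using hxy,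
           B, hB, fun z hz => by rcases Sym2.mem_iff.1 hz with rfl | rfl <;> assumption⟩
        exact SimpleGraph.mem_edgeFinset.1 (h this)
      · intro h e he
        obtain ⟨hd, B, hB, hall⟩ := (blk_edge C e).1 he
        induction e using Sym2.ind with
        | _ x y =>
          rw [SimpleGraph.mem_edgeFinset, SimpleGraph.mem_edgeSet]
          exact h B hB x (hall x (Sym2.mem_mk_left x y)) y (hall y (Sym2.mem_mk_right x y))
            (by simpa [Sym2.isDiag_iff_proj_eq] using hd)
    -- real arithmetic
    have hcL : (corrLoss G C : ℝ) = (NL G C : ℝ) + (PL G C : ℝ) := by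
      rw [corrLoss]; push_cast; ring
    have h1r : (NL G C : ℝ) + ((W ∩ E).card : ℝ) = (W.card : ℝ) := by exact_mod_cast h1
    have h2r : (PL G C : ℝ) + ((W ∩ E).card : ℝ) = (E.card : ℝ) := by exact_mod_cast h2
    have hsumr : 2 * (W.card : ℝ) ≤ (Fintype.card V : ℝ) * ((p : ℝ) - 1) := by
      have : ((p : ℝ) - 1) = ((p - 1 : ℕ) : ℝ) := by
        rw [Nat.cast_sub hp]; norm_num
      rw [this]
      exact_mod_cast hsum ▸ hsumle
    have hNLpos : (0 : ℝ) ≤ (NL G C : ℝ) := Nat.cast_nonneg _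
    constructor
    · linarith
    constructor
    · intro heq
      have hNL0 : (NL G C : ℝ) = 0 := by linarith
      have hNL0' : NL G C = 0 := by exact_mod_cast hNL0
      have hWeq : 2 * (W.card : ℝ) = (Fintype.card V : ℝ) * ((p : ℝ) - 1) := by linarith
      have hsumeq : ∑ v, (blkGraph C).degree v = Fintype.card V * (p - 1) := by
        have : ((∑ v, (blkGraph C).degree v : ℕ) : ℝ) = ((Fintype.card V * (p - 1) : ℕ) : ℝ) := by
          rw [hsum]
          push_cast [Nat.cast_sub hp]
          linarith
        exact_mod_cast this
      intro B hB
      exact ⟨hsizes.1 hsumeq B hB, hclique.1 hNL0' B hB⟩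
    · intro h
      have hNL0' : NL G C = 0 := hclique.2 fun B hB => (h B hB).2
      have hsumeq : ∑ v, (blkGraph C).degree v = Fintype.card V * (p - 1) :=
        hsizes.2 fun B hB => (h B hB).1
      have hWeq : 2 * (W.card : ℝ) = (Fintype.card V : ℝ) * ((p : ℝ) - 1) := by
        have : ((2 * W.card : ℕ) : ℝ) = ((Fintype.card V * (p - 1) : ℕ) : ℝ) := by
          exact_mod_cast (hsum ▸ hsumeq)
        push_cast [Nat.cast_sub hp] at this
        linarith
      have : (NL G C : ℝ) = 0 := by rw [hNL0']; norm_num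
      linarith
  refine ⟨main, fun _ C hC hne => ?_⟩
  exact lt_of_le_of_ne (main C hC).1 fun h => hne ((main C hC).2.1 h.symm)
end

section
/- Fix an integer k ≥ 2 and let a₁,...,a_k, b₁,...,b_k, c₁,...,c_k, c′₁,...,c′_k be 4k distinct elements. Consider the 2k triples e_i = {a_i, b_i, c_i} and f_i = {a_{i+1 mod k}, b_i, c′_i} for 1 ≤ i ≤ k (indices of a taken cyclically). Then a subfamily M′ ⊆ {e₁,...,e_k, f₁,...,f_k} covers each element a₁,...,a_k exactly once and each element b₁,...,b_k exactly once if and only if M′ = {e₁,...,e_k} or M′ = {f₁,...,f_k}. (This is the truth-setting gadget in the reduction from 3-SAT to 3-dimensional matching: selecting all e_i corresponds to assigning the literal true, and selecting all f_i corresponds to assigning it false.) -/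
open Finset

lemma aux_card_pair {β : Type*} [DecidableEq β] {s : Finset β} {x y : β} (hxy : x ≠ y) :
    (s ∩ {x, y}).card = 1 ↔ ((x ∈ s ∧ y ∉ s) ∨ (x ∉ s ∧ y ∈ s)) := by
  by_cases hx : x ∈ s <;> by_cases hy : y ∈ s
  · have h : s ∩ {x, y} = {x, y} := by
      ext z; simp only [mem_inter, mem_insert, mem_singleton]
      constructor
      · tauto
      · rintro (rfl | rfl) <;> simp [hx, hy]
    rw [h, card_insert_of_notMem (by simp [hxy]), card_singleton]
    simp [hx, hy]
  · have h : s ∩ {x, y} = {x} := by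
      ext z; simp only [mem_inter, mem_insert, mem_singleton]
      constructor
      · rintro ⟨hz, (rfl | rfl)⟩; rfl; exact absurd hz hy
      · rintro rfl; simp [hx]
    rw [h, card_singleton]; simp [hx, hy]
  · have h : s ∩ {x, y} = {y} := by
      ext z; simp only [mem_inter, mem_insert, mem_singleton]
      constructor
      · rintro ⟨hz, (rfl | rfl)⟩; exact absurd hz hx; rfl
      · rintro rfl; simp [hy]
    rw [h, card_singleton]; simp [hx, hy]
  · have h : s ∩ {x, y} = ∅ := by
      ext z; simp only [mem_inter, mem_insert, mem_singleton, notMem_empty, iff_false]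
      rintro ⟨hz, (rfl | rfl)⟩; exact hx hz; exact hy hz
    rw [h]; simp [hx, hy]

/-- Fix `k ≥ 2` and `4k` distinct elements
`a₁,…,a_k, b₁,…,b_k, c₁,…,c_k, c′₁,…,c′_k`. With the triples `e i = {a i, b i, c i}` and
`f i = {a (i+1 mod k), b i, c′ i}`, a subfamily `M′ ⊆ {e₁,…,e_k, f₁,…,f_k}` covers each
`a i` exactly once and each `b i` exactly once if and only if `M′ = {e₁,…,e_k}` or
`M′ = {f₁,…,f_k}`. -/
theorem stmt13 {α : Type*} [DecidableEq α] (k : ℕ) (hk : 2 ≤ k)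
    (a b c c' : Fin k → α)
    -- the 4k elements are distinct
    (hdist : Function.Injective fun q : Fin k × Fin 4 =>
      match q.2 with
      | 0 => a q.1
      | 1 => b q.1
      | 2 => c q.1
      | 3 => c' q.1)
    (e f : Fin k → Finset α)
    (he : ∀ i, e i = {a i, b i, c i})
    (hf : ∀ i, f i = {a (i + ⟨1, by omega⟩), b i, c' i})
    (M' : Finset (Finset α))
    (hM' : M' ⊆ Finset.image e Finset.univ ∪ Finset.image f Finset.univ) :
    ((∀ j : Fin k, (M'.filter fun t => a j ∈ t).card = 1) ∧
     (∀ j : Fin k, (M'.filter fun t => b j ∈ t).card = 1)) ↔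
      (M' = Finset.image e Finset.univ ∨ M' = Finset.image f Finset.univ) := by
  haveI : NeZero k := ⟨by omega⟩
  -- distinctness consequences
  have ha : ∀ i j, a i = a j → i = j := fun i j h => by
    simpa using hdist (a₁ := (i, 0)) (a₂ := (j, 0)) h
  have hb : ∀ i j, b i = b j → i = j := fun i j h => by
    simpa using hdist (a₁ := (i, 1)) (a₂ := (j, 1)) h
  have hab : ∀ i j, a i ≠ b j := fun i j h => by
    simpa using hdist (a₁ := (i, 0)) (a₂ := (j, 1)) h
  have hac : ∀ i j, a i ≠ c j := fun i j h => by
    simpa using hdist (a₁ := (i, 0)) (a₂ := (j, 2)) h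
  have hac' : ∀ i j, a i ≠ c' j := fun i j h => by
    simpa using hdist (a₁ := (i, 0)) (a₂ := (j, 3)) h
  have hbc : ∀ i j, b i ≠ c j := fun i j h => by
    simpa using hdist (a₁ := (i, 1)) (a₂ := (j, 2)) h
  have hbc' : ∀ i j, b i ≠ c' j := fun i j h => by
    simpa using hdist (a₁ := (i, 1)) (a₂ := (j, 3)) h
  have hcc' : ∀ i j, c i ≠ c' j := fun i j h => by
    simpa using hdist (a₁ := (i, 2)) (a₂ := (j, 3)) h
  have h1 : (⟨1, by omega⟩ : Fin k) = 1 := by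
    rw [Fin.ext_iff, Fin.val_one', Nat.mod_eq_of_lt (by omega)]
  have hf' : ∀ i, f i = {a (i + 1), b i, c' i} := fun i => by rw [hf i, h1]
  have hsub : ∀ j : Fin k, (j - 1) + 1 = j := fun j => sub_add_cancel j 1
  -- membership lemmas
  have memAE : ∀ j i, a j ∈ e i ↔ i = j := fun j i => by
    rw [he i]; simp only [mem_insert, mem_singleton]
    constructor
    · rintro (h | h | h)
      · exact (ha j i h).symm
      · exact absurd h (hab j i)
      · exact absurd h (hac j i)
    · rintro rfl; exact Or.inl rfl
  have memAF : ∀ j i, a j ∈ f i ↔ j = i + 1 := fun j i => by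
    rw [hf' i]; simp only [mem_insert, mem_singleton]
    constructor
    · rintro (h | h | h)
      · exact ha j (i + 1) h
      · exact absurd h (hab j i)
      · exact absurd h (hac' j i)
    · rintro rfl; exact Or.inl rfl
  have memBE : ∀ j i, b j ∈ e i ↔ i = j := fun j i => by
    rw [he i]; simp only [mem_insert, mem_singleton]
    constructor
    · rintro (h | h | h)
      · exact absurd h.symm (hab i j)
      · exact (hb j i h).symm
      · exact absurd h (hbc j i)
    · rintro rfl; exact Or.inr (Or.inl rfl)
  have memBF : ∀ j i, b j ∈ f i ↔ i = j := fun j i => by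
    rw [hf' i]; simp only [mem_insert, mem_singleton]
    constructor
    · rintro (h | h | h)
      · exact absurd h.symm (hab (i + 1) j)
      · exact (hb j i h).symm
      · exact absurd h (hbc' j i)
    · rintro rfl; exact Or.inr (Or.inl rfl)
  have memC'E : ∀ j i, c' j ∉ e i := fun j i h => by
    rw [he i] at h; simp only [mem_insert, mem_singleton] at h
    rcases h with h | h | h
    · exact hac' i j h.symm
    · exact hbc' i j h.symm
    · exact hcc' i j h.symm
  have hEF : ∀ i j, e i ≠ f j := fun i j h => by
    have : c' j ∈ f j := by rw [hf' j]; simp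
    rw [← h] at this
    exact memC'E j i this
  -- filter characterizations
  have filtA : ∀ j, (M'.filter fun t => a j ∈ t) = M' ∩ {e j, f (j - 1)} := fun j => by
    ext t
    simp only [mem_filter, mem_inter, mem_insert, mem_singleton]
    constructor
    · rintro ⟨ht, hat⟩
      refine ⟨ht, ?_⟩
      rcases Finset.mem_union.mp (hM' ht) with h | h <;>
        obtain ⟨i, -, rfl⟩ := Finset.mem_image.mp h
      · left; rw [(memAE j i).mp hat]
      · right
        have := (memAF j i).mp hat
        have : i = j - 1 := by rw [this]; simp
        rw [this]
    · rintro ⟨ht, (rfl | rfl)⟩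
      · exact ⟨ht, (memAE j j).mpr rfl⟩
      · exact ⟨ht, (memAF j (j - 1)).mpr (hsub j).symm⟩
  have filtB : ∀ j, (M'.filter fun t => b j ∈ t) = M' ∩ {e j, f j} := fun j => by
    ext t
    simp only [mem_filter, mem_inter, mem_insert, mem_singleton]
    constructor
    · rintro ⟨ht, hbt⟩
      refine ⟨ht, ?_⟩
      rcases Finset.mem_union.mp (hM' ht) with h | h <;>
        obtain ⟨i, -, rfl⟩ := Finset.mem_image.mp h
      · left; rw [(memBE j i).mp hbt]
      · right; rw [(memBF j i).mp hbt]
    · rintro ⟨ht, (rfl | rfl)⟩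
      · exact ⟨ht, (memBE j j).mpr rfl⟩
      · exact ⟨ht, (memBF j j).mpr rfl⟩
  constructor
  · rintro ⟨hA, hB⟩
    have XA : ∀ j, (e j ∈ M' ∧ f (j - 1) ∉ M') ∨ (e j ∉ M' ∧ f (j - 1) ∈ M') := fun j =>
      (aux_card_pair (hEF j (j - 1))).mp (by rw [← filtA j]; exact hA j)
    have XB : ∀ j, (e j ∈ M' ∧ f j ∉ M') ∨ (e j ∉ M' ∧ f j ∈ M') := fun j =>
      (aux_card_pair (hEF j j)).mp (by rw [← filtB j]; exact hB j)
    have step : ∀ j : Fin k, f j ∈ M' ↔ f (j - 1) ∈ M' := fun j => by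
      rcases XB j with ⟨u1, u2⟩ | ⟨u1, u2⟩ <;> rcases XA j with ⟨v1, v2⟩ | ⟨v1, v2⟩ <;> tauto
    have step' : ∀ j : Fin k, f (j + 1) ∈ M' ↔ f j ∈ M' := fun j => by
      have := step (j + 1); rwa [add_sub_cancel_right] at this
    have const : ∀ j : Fin k, (f j ∈ M' ↔ f 0 ∈ M') := by
      have key : ∀ n (h : n < k), f ⟨n, h⟩ ∈ M' ↔ f 0 ∈ M' := by
        intro n
        induction n with
        | zero =>
          intro h
          have : (⟨0, h⟩ : Fin k) = 0 := by rw [Fin.ext_iff]; simp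
          rw [this]
        | succ n ih =>
          intro h
          have hn : n < k := by omega
          have heq : (⟨n + 1, h⟩ : Fin k) = ⟨n, hn⟩ + 1 := by
            rw [Fin.ext_iff, Fin.add_def]
            simp only [Fin.val_one', Nat.mod_eq_of_lt (show 1 < k by omega)]
            exact (Nat.mod_eq_of_lt h).symm
          rw [heq, step' ⟨n, hn⟩]
          exact ih hn
      intro j
      have := key j.val j.isLt
      simpa using this
    by_cases h0 : f 0 ∈ M'
    · right
      have hfall : ∀ j, f j ∈ M' := fun j => (const j).mpr h0
      have heno : ∀ j, e j ∉ M' := fun j => by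
        rcases XB j with ⟨u1, u2⟩ | ⟨u1, u2⟩
        · exact absurd (hfall j) u2
        · exact u1
      apply Finset.Subset.antisymm
      · intro t ht
        rcases Finset.mem_union.mp (hM' ht) with h | h
        · obtain ⟨i, -, rfl⟩ := Finset.mem_image.mp h; exact absurd ht (heno i)
        · exact h
      · intro t ht
        obtain ⟨i, -, rfl⟩ := Finset.mem_image.mp ht
        exact hfall i
    · left
      have hfno : ∀ j, f j ∉ M' := fun j hh => h0 ((const j).mp hh)
      have heall : ∀ j, e j ∈ M' := fun j => by
        rcases XB j with ⟨u1, u2⟩ | ⟨u1, u2⟩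
        · exact u1
        · exact absurd u2 (hfno j)
      apply Finset.Subset.antisymm
      · intro t ht
        rcases Finset.mem_union.mp (hM' ht) with h | h
        · exact h
        · obtain ⟨i, -, rfl⟩ := Finset.mem_image.mp h; exact absurd ht (hfno i)
      · intro t ht
        obtain ⟨i, -, rfl⟩ := Finset.mem_image.mp ht
        exact heall i
  · rintro (rfl | rfl)
    · constructor <;> intro j
      · have hint : Finset.image e Finset.univ ∩ {e j, f (j - 1)} = {e j} := by
          ext t
          simp only [mem_inter, mem_image, mem_univ, true_and, mem_insert, mem_singleton]
          constructor
          · rintro ⟨⟨i, rfl⟩, (h | h)⟩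
            · exact h
            · exact absurd h (hEF i (j - 1))
          · rintro rfl; exact ⟨⟨j, rfl⟩, Or.inl rfl⟩
        rw [filtA j, hint, card_singleton]
      · have hint : Finset.image e Finset.univ ∩ {e j, f j} = {e j} := by
          ext t
          simp only [mem_inter, mem_image, mem_univ, true_and, mem_insert, mem_singleton]
          constructor
          · rintro ⟨⟨i, rfl⟩, (h | h)⟩
            · exact h
            · exact absurd h (hEF i j)
          · rintro rfl; exact ⟨⟨j, rfl⟩, Or.inl rfl⟩
        rw [filtB j, hint, card_singleton]
    · constructor <;> intro j
      · have hint : Finset.image f Finset.univ ∩ {e j, f (j - 1)} = {f (j - 1)} := by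
          ext t
          simp only [mem_inter, mem_image, mem_univ, true_and, mem_insert, mem_singleton]
          constructor
          · rintro ⟨⟨i, rfl⟩, (h | h)⟩
            · exact absurd h.symm (hEF j i)
            · exact h
          · rintro rfl; exact ⟨⟨j - 1, rfl⟩, Or.inr rfl⟩
        rw [filtA j, hint, card_singleton]
      · have hint : Finset.image f Finset.univ ∩ {e j, f j} = {f j} := by
          ext t
          simp only [mem_inter, mem_image, mem_univ, true_and, mem_insert, mem_singleton]
          constructor
          · rintro ⟨⟨i, rfl⟩, (h | h)⟩
            · exact absurd h.symm (hEF j i)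
            · exact h
          · rintro rfl; exact ⟨⟨j, rfl⟩, Or.inr rfl⟩
        rw [filtB j, hint, card_singleton]
end
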